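/- For σ > 0 and n ≥ 2, the function i ↦ Σ_{l=1}^{n} exp(−(i−l)²/(2n²σ²)) on {1,…,n} satisfies: Σ_l exp(−(i−l)²/(2n²σ²)) = Σ_l exp(−(i'−l)²/(2n²σ²)) if and only if i' = i or i' = n+1−i. In particular this sum is strictly increasing in i on the range where i < n+1−i. -/

import Mathlib

open Finset Real

theorem stmt_12 (n : ℕ) (hn : 2 ≤ n) (σ : ℝ) (hσ : 0 < σ) :
    (∀ i i' : ℕ, 1 ≤ i → i ≤ n → 1 ≤ i' → i' ≤ n →
      ((∑ l ∈ Finset.Icc 1 n, Real.exp (-((i : ℝ) - l) ^ 2 / (2 * n ^ 2 * σ ^ 2)) =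
          ∑ l ∈ Finset.Icc 1 n, Real.exp (-((i' : ℝ) - l) ^ 2 / (2 * n ^ 2 * σ ^ 2))) ↔
        (i' = i ∨ i' = n + 1 - i))) ∧
    (∀ i i' : ℕ, 1 ≤ i → i < i' → i' ≤ n → i' < n + 1 - i' →
      (∑ l ∈ Finset.Icc 1 n, Real.exp (-((i : ℝ) - l) ^ 2 / (2 * n ^ 2 * σ ^ 2))) <
        ∑ l ∈ Finset.Icc 1 n, Real.exp (-((i' : ℝ) - l) ^ 2 / (2 * n ^ 2 * σ ^ 2))) := by
  have hn0 : (n : ℝ) ≠ 0 := Nat.cast_ne_zero.mpr (by omega)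
  have hc : (0 : ℝ) < 2 * n ^ 2 * σ ^ 2 := by positivity
  set c : ℝ := 2 * n ^ 2 * σ ^ 2 with hc_def
  let S : ℕ → ℝ := fun i => ∑ l ∈ Finset.Icc 1 n, Real.exp (-((i : ℝ) - l) ^ 2 / c)
  -- rewrite over range
  have hrange : ∀ i : ℕ, S i = ∑ l ∈ Finset.range n, Real.exp (-((i : ℝ) - (1 + l)) ^ 2 / c) := by
    intro i
    have : Finset.Icc 1 n = Finset.image (fun l => 1 + l) (Finset.range n) := by
      ext x
      simp only [Finset.mem_Icc, Finset.mem_image, Finset.mem_range]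
      constructor
      · intro ⟨h1, h2⟩; exact ⟨x - 1, by omega, by omega⟩
      · rintro ⟨y, hy, rfl⟩; omega
    rw [show S i = ∑ l ∈ Finset.Icc 1 n, Real.exp (-((i : ℝ) - l) ^ 2 / c) from rfl, this,
      Finset.sum_image (by intro a _ b _ h; simpa using h)]
    push_cast
    rfl
  have hstep : ∀ j : ℕ, S (j + 1) - S j
      = Real.exp (-(j : ℝ) ^ 2 / c) - Real.exp (-((j : ℝ) - n) ^ 2 / c) := by
    intro j
    obtain ⟨m, rfl⟩ : ∃ m, n = m + 1 := ⟨n - 1, by omega⟩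
    rw [hrange, hrange]
    have e1 : ∑ l ∈ Finset.range (m + 1), Real.exp (-(((j : ℝ) + 1) - (1 + l)) ^ 2 / c)
        = ∑ l ∈ Finset.range (m + 1), Real.exp (-((j : ℝ) - l) ^ 2 / c) := by
      apply Finset.sum_congr rfl; intro l _; ring_nf
    have e2 : ∑ l ∈ Finset.range (m + 1), Real.exp (-((j : ℝ) - (1 + l)) ^ 2 / c)
        = ∑ l ∈ Finset.range (m + 1), Real.exp (-((j : ℝ) - (l + 1 : ℕ)) ^ 2 / c) := by
      apply Finset.sum_congr rfl; intro l _; push_cast; ring_nf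
    push_cast
    rw [e1, e2, Finset.sum_range_succ' (fun l => Real.exp (-((j : ℝ) - l) ^ 2 / c)) m,
      Finset.sum_range_succ (fun l => Real.exp (-((j : ℝ) - (l + 1 : ℕ)) ^ 2 / c)) m]
    push_cast [sub_zero]
    ring
  have hlt : ∀ j : ℕ, 2 * j < n → S j < S (j + 1) := by
    intro j hj
    have h := hstep j
    have hj' : (j : ℝ) < (n : ℝ) - j := by
      have : (2 * j : ℕ) < (n : ℕ) := hj
      have := (Nat.cast_lt (α := ℝ)).mpr this
      push_cast at this; linarith
    have hsq : (j : ℝ) ^ 2 < ((j : ℝ) - n) ^ 2 := by nlinarith [Nat.cast_nonneg (α := ℝ) j]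
    have : Real.exp (-((j : ℝ) - n) ^ 2 / c) < Real.exp (-(j : ℝ) ^ 2 / c) := by
      apply Real.exp_lt_exp.mpr
      apply div_lt_div_of_pos_right _ hc
      linarith
    linarith
  have hmono : ∀ a b : ℕ, a < b → 2 * b ≤ n + 1 → S a < S b := by
    intro a b
    induction b with
    | zero => omega
    | succ m ih =>
      intro hab hb
      rcases Nat.lt_succ_iff_lt_or_eq.mp hab with h | h
      · exact (ih h (by omega)).trans (hlt m (by omega))
      · subst h; exact hlt a (by omega)
  have hsym : ∀ i : ℕ, 1 ≤ i → i ≤ n → S i = S (n + 1 - i) := by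
    intro i h1 h2
    apply Finset.sum_nbij' (fun l => n + 1 - l) (fun l => n + 1 - l)
    · intro a ha; simp only [Finset.mem_Icc] at *; omega
    · intro a ha; simp only [Finset.mem_Icc] at *; omega
    · intro a ha; simp only [Finset.mem_Icc] at ha; omega
    · intro a ha; simp only [Finset.mem_Icc] at ha; omega
    · intro a ha
      simp only [Finset.mem_Icc] at ha
      congr 1
      have c1 : ((n + 1 - a : ℕ) : ℝ) = (n : ℝ) + 1 - a := by
        push_cast [Nat.cast_sub (by omega : a ≤ n + 1)]; ring
      have c2 : ((n + 1 - i : ℕ) : ℝ) = (n : ℝ) + 1 - i := by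
        push_cast [Nat.cast_sub (by omega : i ≤ n + 1)]; ring
      rw [c1, c2]
      ring
  constructor
  · intro i i' h1 h2 h1' h2'
    show S i = S i' ↔ (i' = i ∨ i' = n + 1 - i)
    have hSa : S i = S (min i (n + 1 - i)) := by
      rcases min_cases i (n + 1 - i) with ⟨h, _⟩ | ⟨h, _⟩
      · rw [h]
      · rw [h]; exact hsym i h1 h2
    have hSb : S i' = S (min i' (n + 1 - i')) := by
      rcases min_cases i' (n + 1 - i') with ⟨h, _⟩ | ⟨h, _⟩
      · rw [h]
      · rw [h]; exact hsym i' h1' h2'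
    constructor
    · intro heq
      have hab : min i (n + 1 - i) = min i' (n + 1 - i') := by
        by_contra hne
        rcases Nat.lt_or_ge (min i (n + 1 - i)) (min i' (n + 1 - i')) with h | h
        · have := hmono _ _ h (by omega); rw [← hSa, ← hSb] at this; linarith
        · have h' : min i' (n + 1 - i') < min i (n + 1 - i) := by omega
          have := hmono _ _ h' (by omega); rw [← hSa, ← hSb] at this; linarith
      omega
    · rintro (rfl | rfl)
      · rfl
      · exact hsym i h1 h2
  · intro i i' h1 hii' h2' hlt'
    show S i < S i'
    exact hmono i i' hii' (by omega)
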